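/- arXiv:2411.15364 — 2 statements merged into one kernel-verified Lean document; each statement's English description precedes it below -/
import Mathlib

section
/- A countable collection C = {L_1, L_2, ...} of infinite languages over U can be exhaustively generated in the limit by some algorithm if and only if C satisfies Weak Angluin's Condition with Existence. -/
/-! STATEMENT 9: A countable collection C = {L_1, L_2, ...} of infinite languages over U can be exhaustively generated in the limit by some algorithm iff C satisfies Weak Angluin's Condition with Existence. -/

/-- `x` is an enumeration of the language `K`. -/
def IsEnumerationOf {U : Type} (K : Set U) (x : ℕ → U) : Prop :=
  (∀ t, x t ∈ K) ∧ ∀ w ∈ K, ∃ t, x t = w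

/-- The set `S_t` of distinct strings among the first `t` inputs. -/
def seen {U : Type} (x : ℕ → U) (t : ℕ) : Set U := x '' {i | i < t}

/-- The input prefix `(x_1, ..., x_t)` as a list. -/
def inputList {U : Type} (x : ℕ → U) (t : ℕ) : List U :=
  List.ofFn (fun i : Fin t => x i)

/-- `Z_{<t}`: the distinct strings among `G_1(1), ..., G_{t-1}(1)`. -/
def ZltSet {U : Type} (A : List U → ℕ → U) (x : ℕ → U) (t : ℕ) : Set U :=
  (fun s => A (inputList x s) 0) '' {s | 1 ≤ s ∧ s < t}

/-- `Z_{≥t}`: the distinct strings in `G_t(1), G_t(2), ...`. -/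
def ZgeSet {U : Type} (A : List U → ℕ → U) (x : ℕ → U) (t : ℕ) : Set U :=
  Set.range (A (inputList x t))

/-- The algorithm `A` exhaustively generates in the limit from the collection `C`. -/
def ExhaustivelyGenerates {U : Type} (A : List U → ℕ → U) (C : Set (Set U)) : Prop :=
  ∀ K ∈ C, ∀ x : ℕ → U, IsEnumerationOf K x →
    ∃ tstar : ℕ, ∀ t : ℕ, tstar ≤ t →
      (ZgeSet A x t \ K).Finite ∧ K ⊆ seen x t ∪ ZltSet A x t ∪ ZgeSet A x t

/-- Weak Angluin's Condition with Existence: every L ∈ C has a finite tell-tale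
T ⊆ L such that every L' ∈ C with T ⊆ L' and L' ⊊ L satisfies |L \ L'| < ∞. -/
def WeakAngluinExistence {U : Type} (C : Set (Set U)) : Prop :=
  ∀ L ∈ C, ∃ T : Set U, T.Finite ∧ T ⊆ L ∧
    ∀ L' ∈ C, T ⊆ L' → L' ⊂ L → (L \ L').Finite


lemma isEnum_iff {U : Type} {K : Set U} {x : ℕ → U} :
    IsEnumerationOf K x ↔ Set.range x = K := by
  constructor
  · rintro ⟨h1, h2⟩
    apply Set.eq_of_subset_of_subset
    · rintro a ⟨t, rfl⟩; exact h1 t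
    · intro w hw; obtain ⟨t, ht⟩ := h2 w hw; exact ⟨t, ht⟩
  · rintro rfl
    exact ⟨fun t => ⟨t, rfl⟩, fun w hw => hw⟩

lemma exists_enum {U : Type} [Countable U] {S : Set U} (h : S.Infinite) :
    ∃ f : ℕ → U, Set.range f = S := by
  obtain ⟨f, hf⟩ := (Set.to_countable S).exists_eq_range h.nonempty
  exact ⟨f, hf.symm⟩

lemma seen_finite {U : Type} (x : ℕ → U) (t : ℕ) : (seen x t).Finite :=
  (Set.finite_Iio t).image x

lemma Zlt_finite {U : Type} (A : List U → ℕ → U) (x : ℕ → U) (t : ℕ) :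
    (ZltSet A x t).Finite :=
  Set.Finite.image _ ((Set.finite_Iio t).subset (fun s hs => hs.2))

lemma seen_mono {U : Type} (x : ℕ → U) {s t : ℕ} (h : s ≤ t) : seen x s ⊆ seen x t := by
  rintro a ⟨i, hi, rfl⟩; exact ⟨i, lt_of_lt_of_le hi h, rfl⟩

lemma seen_subset {U : Type} {K : Set U} {x : ℕ → U} (h : ∀ t, x t ∈ K) (t : ℕ) :
    seen x t ⊆ K := by
  rintro a ⟨i, _, rfl⟩; exact h i

lemma inputList_congr {U : Type} {x y : ℕ → U} {t : ℕ} (h : ∀ i < t, x i = y i) :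
    inputList x t = inputList y t := by
  unfold inputList
  congr 1
  funext i
  exact h i i.2

lemma mem_inputList {U : Type} {x : ℕ → U} {t : ℕ} {a : U} :
    a ∈ inputList x t ↔ a ∈ seen x t := by
  simp [inputList, List.mem_ofFn, seen, Set.mem_image]
  constructor
  · rintro ⟨i, rfl⟩; exact ⟨i, i.2, rfl⟩
  · rintro ⟨i, hi, rfl⟩; exact ⟨⟨i, hi⟩, rfl⟩

lemma Zge_congr {U : Type} {A : List U → ℕ → U} {x y : ℕ → U} {t : ℕ}
    (h : ∀ i < t, x i = y i) : ZgeSet A x t = ZgeSet A y t := by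
  unfold ZgeSet; rw [inputList_congr h]

lemma Zlt_congr {U : Type} {A : List U → ℕ → U} {x y : ℕ → U} {t : ℕ}
    (h : ∀ i < t, x i = y i) : ZltSet A x t = ZltSet A y t := by
  unfold ZltSet
  apply Set.image_congr
  rintro s ⟨_, hs⟩
  rw [inputList_congr (fun i hi => h i (lt_trans hi hs))]

lemma seen_congr {U : Type} {x y : ℕ → U} {t : ℕ}
    (h : ∀ i < t, x i = y i) : seen x t = seen y t := by
  unfold seen
  exact Set.image_congr (fun i hi => h i hi)

lemma eventually_seen {U : Type} {K : Set U} {x : ℕ → U}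
    (hx : ∀ w ∈ K, ∃ t, x t = w) {T : Set U} (hT : T.Finite) (hTK : T ⊆ K) :
    ∃ t1, ∀ t, t1 ≤ t → T ⊆ seen x t := by
  revert hTK
  refine Set.Finite.induction_on _ hT ?_ ?_
  · exact fun _ => ⟨0, fun t _ => Set.empty_subset _⟩
  · intro a T _ _ ih hTK
    obtain ⟨t1, ht1⟩ := ih ((Set.subset_insert a T).trans hTK)
    obtain ⟨s, hs⟩ := hx a (hTK (Set.mem_insert a T))
    refine ⟨max t1 (s+1), fun t ht => ?_⟩
    rw [Set.insert_subset_iff]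
    refine ⟨⟨s, ?_, hs⟩, ht1 t (le_trans (le_max_left _ _) ht)⟩
    exact lt_of_lt_of_le (Nat.lt_succ_self s) (le_trans (le_max_right _ _) ht)

lemma direction2 {U : Type} [Countable U] (L : ℕ → Set U) (hL : ∀ i, (L i).Infinite)
    (hW : WeakAngluinExistence (Set.range L)) :
    ∃ A : List U → ℕ → U, ExhaustivelyGenerates A (Set.range L) := by
  classical
  choose T hTfin hTsub hTang using fun i => hW (L i) ⟨i, rfl⟩
  choose e he using fun i => exists_enum (hL i)
  refine ⟨fun l n => e (sInf {i | T i ⊆ {a | a ∈ l} ∧ ∀ a ∈ l, a ∈ L i}) n, ?_⟩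
  rintro K ⟨j, rfl⟩ x hx
  have hxK : ∀ t, x t ∈ L j := hx.1
  have hseenK : ∀ t, seen x t ⊆ L j := seen_subset hxK
  -- the candidate set at time t
  have hset : ∀ t : ℕ, {i | T i ⊆ {a | a ∈ inputList x t} ∧ ∀ a ∈ inputList x t, a ∈ L i}
      = {i | T i ⊆ seen x t ∧ seen x t ⊆ L i} := by
    intro t
    ext i
    simp only [Set.mem_setOf_eq]
    constructor
    · rintro ⟨h1, h2⟩
      exact ⟨fun a ha => mem_inputList.mp (h1 ha), fun a ha => h2 a (mem_inputList.mpr ha)⟩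
    · rintro ⟨h1, h2⟩
      exact ⟨fun a ha => mem_inputList.mpr (h1 ha), fun a ha => h2 (mem_inputList.mp ha)⟩
  set G : Set ℕ := {i | T i ⊆ L j ∧ L j ⊆ L i} with hG
  have hjG : j ∈ G := ⟨hTsub j, le_refl _⟩
  set i0 : ℕ := sInf G with hi0
  have hi0G : i0 ∈ G := Nat.sInf_mem ⟨j, hjG⟩
  obtain ⟨t1, ht1⟩ := eventually_seen hx.2 (hTfin i0) hi0G.1
  have hbad : ∀ i, ∃ ti, i < i0 → ∀ t, ti ≤ t → ¬ (T i ⊆ seen x t ∧ seen x t ⊆ L i) := by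
    intro i
    by_cases hi : i < i0
    · have hiG : i ∉ G := fun h => not_lt.mpr (Nat.sInf_le h) hi
      rw [hG, Set.mem_setOf_eq, not_and_or] at hiG
      rcases hiG with h | h
      · refine ⟨0, fun _ t _ hP => ?_⟩
        obtain ⟨a, ha, haK⟩ := Set.not_subset.mp h
        exact haK (hseenK t (hP.1 ha))
      · obtain ⟨a, ha, hai⟩ := Set.not_subset.mp h
        obtain ⟨s, hs⟩ := hx.2 a ha
        refine ⟨s + 1, fun _ t ht hP => ?_⟩
        exact hai (hP.2 ⟨s, Nat.lt_of_succ_le ht, hs⟩)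
    · exact ⟨0, fun h => absurd h hi⟩
  choose tB htB using hbad
  set t0 := max t1 ((Finset.range i0).sup tB) with ht0
  refine ⟨t0, fun t ht => ?_⟩
  have hPt : T i0 ⊆ seen x t ∧ seen x t ⊆ L i0 :=
    ⟨ht1 t (le_trans (le_max_left _ _) ht), (hseenK t).trans hi0G.2⟩
  have hinf : sInf {i | T i ⊆ seen x t ∧ seen x t ⊆ L i} = i0 := by
    apply le_antisymm (Nat.sInf_le hPt)
    by_contra hlt
    push_neg at hlt
    have hmem := Nat.sInf_mem (⟨i0, hPt⟩ : {i | T i ⊆ seen x t ∧ seen x t ⊆ L i}.Nonempty)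
    exact htB _ hlt t (le_trans (le_trans (Finset.le_sup (Finset.mem_range.mpr hlt))
      (le_max_right _ _)) ht) hmem
  have hZge : ZgeSet (fun l n => e (sInf {i | T i ⊆ {a | a ∈ l} ∧ ∀ a ∈ l, a ∈ L i}) n) x t
      = L i0 := by
    unfold ZgeSet
    have heq : (fun l n => e (sInf {i | T i ⊆ {a | a ∈ l} ∧ ∀ a ∈ l, a ∈ L i}) n)
        (inputList x t) = e i0 := by
      funext n
      show e (sInf {i | T i ⊆ {a | a ∈ inputList x t} ∧ ∀ a ∈ inputList x t, a ∈ L i}) n = _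
      rw [hset t, hinf]
    rw [heq]
    exact he i0
  rw [hZge]
  constructor
  · rcases eq_or_ne (L j) (L i0) with h | h
    · rw [← h]; simp
    · exact hTang i0 (L j) ⟨j, rfl⟩ hi0G.1 (ssubset_of_subset_of_ne hi0G.2 h)
  · intro a ha
    exact Or.inr (hi0G.2 ha)

lemma step_ex {U : Type} [Countable U] {C : Set (Set U)} {A : List U → ℕ → U}
    (hA : ExhaustivelyGenerates A C) {M : Set U}
    (hfail : ∀ T : Set U, T.Finite → T ⊆ M →
      ∃ L', L' ∈ C ∧ T ⊆ L' ∧ L' ⊂ M ∧ (M \ L').Infinite)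
    (hCinf : ∀ K ∈ C, K.Infinite)
    (b : U) (hb : b ∈ M)
    (y : ℕ → U) (m : ℕ) (hy : ∀ n < m, y n ∈ M) :
    ∃ (y' : ℕ → U) (m' : ℕ),
      (∀ n < m', y' n ∈ M) ∧ (∀ n < m, y' n = y n) ∧ m < m' ∧
      (∃ n, n < m' ∧ y' n = b) ∧
      (∃ t, m < t ∧ t < m' ∧ ∃ w ∈ M,
        w ∉ seen y' t ∪ ZltSet A y' t ∪ ZgeSet A y' t) := by
  classical
  have hTfin : (y '' Set.Iio m).Finite := (Set.finite_Iio m).image y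
  have hTM : y '' Set.Iio m ⊆ M := by rintro a ⟨i, hi, rfl⟩; exact hy i hi
  obtain ⟨L', hL'C, hTL', hss, hdiff⟩ := hfail _ hTfin hTM
  obtain ⟨f, hf⟩ := exists_enum (hCinf L' hL'C)
  set z : ℕ → U := fun n => if h : n < m then y n else f (n - m) with hz
  have hzL' : ∀ n, z n ∈ L' := by
    intro n
    by_cases h : n < m
    · simp only [hz, dif_pos h]; exact hTL' ⟨n, h, rfl⟩
    · simp only [hz, dif_neg h]; rw [← hf]; exact ⟨n - m, rfl⟩
  have hzenum : IsEnumerationOf L' z := by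
    refine ⟨hzL', fun w hw => ?_⟩
    rw [← hf] at hw
    obtain ⟨s, rfl⟩ := hw
    refine ⟨s + m, ?_⟩
    simp only [hz, dif_neg (by omega : ¬ s + m < m), Nat.add_sub_cancel]
  obtain ⟨ts, hts⟩ := hA L' hL'C z hzenum
  set t := max ts (m + 1) with htdef
  obtain ⟨hfin, _⟩ := hts t (le_max_left _ _)
  have hBadfin : (seen z t ∪ ZltSet A z t ∪ (ZgeSet A z t \ L')).Finite :=
    ((seen_finite z t).union (Zlt_finite A z t)).union hfin
  obtain ⟨w, hw⟩ := (hdiff.diff hBadfin).nonempty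
  obtain ⟨⟨hwM, hwL'⟩, hwBad⟩ := hw
  set y' : ℕ → U := fun n => if n = t then w else if n = t + 1 then b else z n with hy'
  have hmt : m < t := lt_of_lt_of_le (Nat.lt_succ_self m) (le_max_right _ _)
  have hagree : ∀ i < t, y' i = z i := by
    intro i hi
    simp only [hy', if_neg (Nat.ne_of_lt hi), if_neg (by omega : i ≠ t + 1)]
  refine ⟨y', t + 2, ?_, ?_, by omega, ⟨t + 1, by omega, by simp [hy']⟩, t, hmt, by omega,
    w, hwM, ?_⟩
  · intro n hn
    rcases eq_or_ne n t with rfl | h1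
    · simpa [hy'] using hwM
    rcases eq_or_ne n (t + 1) with rfl | h2
    · simpa [hy'] using hb
    · simp only [hy', if_neg h1, if_neg h2]
      exact hss.subset (hzL' n)
  · intro n hn
    rw [hagree n (lt_of_lt_of_le hn (le_of_lt hmt))]
    simp only [hz, dif_pos hn]
  · rw [seen_congr hagree, Zlt_congr hagree, Zge_congr hagree]
    intro hmem
    rcases hmem with hmem | hmem
    · exact hwBad (Or.inl hmem)
    · exact hwBad (Or.inr ⟨hmem, hwL'⟩)

lemma direction1 {U : Type} [Countable U] {C : Set (Set U)} {A : List U → ℕ → U}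
    (hA : ExhaustivelyGenerates A C) (hCinf : ∀ K ∈ C, K.Infinite) :
    WeakAngluinExistence C := by
  intro M hM
  by_contra hcon
  push_neg at hcon
  have hfail : ∀ T : Set U, T.Finite → T ⊆ M →
      ∃ L', L' ∈ C ∧ T ⊆ L' ∧ L' ⊂ M ∧ (M \ L').Infinite := by
    intro T h1 h2
    obtain ⟨L', hL'C, h3, h4, h5⟩ := hcon T h1 h2
    exact ⟨L', hL'C, h3, h4, h5⟩
  obtain ⟨u, hu⟩ := exists_enum (hCinf M hM)
  have huM : ∀ k, u k ∈ M := fun k => hu ▸ ⟨k, rfl⟩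
  have key : ∀ (k : ℕ) (s : {p : (ℕ → U) × ℕ // ∀ n < p.2, p.1 n ∈ M}),
      ∃ q : {p : (ℕ → U) × ℕ // ∀ n < p.2, p.1 n ∈ M},
        (∀ n < s.1.2, q.1.1 n = s.1.1 n) ∧ s.1.2 < q.1.2 ∧
        (∃ n, n < q.1.2 ∧ q.1.1 n = u k) ∧
        (∃ t, s.1.2 < t ∧ t < q.1.2 ∧ ∃ w ∈ M,
          w ∉ seen q.1.1 t ∪ ZltSet A q.1.1 t ∪ ZgeSet A q.1.1 t) := by
    intro k s
    obtain ⟨y', m', h1, h2, h3, h4, h5⟩ := step_ex hA hfail hCinf (u k) (huM k) s.1.1 s.1.2 s.2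
    exact ⟨⟨(y', m'), h1⟩, h2, h3, h4, h5⟩
  choose F hF1 hF2 hF3 hF4 using key
  set seq : ℕ → {p : (ℕ → U) × ℕ // ∀ n < p.2, p.1 n ∈ M} :=
    fun k => Nat.rec ⟨(fun _ => u 0, 0), fun n hn => absurd hn (Nat.not_lt_zero n)⟩ F k
    with hseqdef
  have hseq : ∀ k, seq (k + 1) = F k (seq k) := fun k => rfl
  set ys : ℕ → ℕ → U := fun k => (seq k).1.1 with hys
  set ms : ℕ → ℕ := fun k => (seq k).1.2 with hms
  have hmono : ∀ k, ms k < ms (k + 1) := by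
    intro k; rw [hms]; simp only [hseq k]; exact hF2 k (seq k)
  have hmsle : ∀ k k', k ≤ k' → ms k ≤ ms k' := by
    intro k k' h
    induction k', h using Nat.le_induction with
    | base => exact le_refl _
    | succ k' h ih => exact le_trans ih (le_of_lt (hmono k'))
  have hmge : ∀ k, k ≤ ms k := by
    intro k
    induction k with
    | zero => exact Nat.zero_le _
    | succ k ih => exact Nat.lt_of_le_of_lt ih (hmono k)
  have hagree : ∀ k k', k ≤ k' → ∀ n < ms k, ys k' n = ys k n := by
    intro k k' h
    induction k', h using Nat.le_induction with
    | base => intro n _; rfl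
    | succ k' h ih =>
      intro n hn
      have : ys (k' + 1) n = ys k' n := by
        rw [hys]; simp only [hseq k']
        exact hF1 k' (seq k') n (lt_of_lt_of_le hn (hmsle k k' h))
      rw [this, ih n hn]
  set x : ℕ → U := fun n => ys (n + 1) n with hx
  have hxy : ∀ k n, n < ms k → x n = ys k n := by
    intro k n hn
    rcases le_total k (n + 1) with h | h
    · exact hagree k (n + 1) h n hn
    · exact (hagree (n + 1) k h n (lt_of_lt_of_le (Nat.lt_succ_self n) (hmge (n + 1)))).symm
  have hxenum : IsEnumerationOf M x := by
    constructor
    · intro n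
      exact (seq (n + 1)).2 n (lt_of_lt_of_le (Nat.lt_succ_self n) (hmge (n + 1)))
    · intro w hw
      rw [← hu] at hw
      obtain ⟨k, rfl⟩ := hw
      obtain ⟨n, hn, hval⟩ := hF3 k (seq k)
      refine ⟨n, ?_⟩
      have : x n = ys (k + 1) n := by
        apply hxy (k + 1) n
        rw [hms]; simp only [hseq k]; exact hn
      rw [this, hys]; simp only [hseq k]; exact hval
  obtain ⟨ts, hts⟩ := hA M hM x hxenum
  obtain ⟨t, ht1, ht2, w, hwM, hwnot⟩ := hF4 ts (seq ts)
  have ht1' : ms ts < t := ht1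
  have ht2' : t < ms (ts + 1) := by rw [hms]; simp only [hseq ts]; exact ht2
  have hag : ∀ i < t, x i = ys (ts + 1) i :=
    fun i hi => hxy (ts + 1) i (lt_trans hi ht2')
  have hcover := (hts t (le_trans (hmge ts) (le_of_lt ht1'))).2 hwM
  rw [seen_congr hag, Zlt_congr hag, Zge_congr hag] at hcover
  have : w ∉ seen (ys (ts + 1)) t ∪ ZltSet A (ys (ts + 1)) t ∪ ZgeSet A (ys (ts + 1)) t := by
    rw [hys]; simp only [hseq ts]; exact hwnot
  exact this hcover

theorem exhaustive_generation_characterization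
    (U : Type) [Countable U] [Infinite U]
    (L : ℕ → Set U) (hL : ∀ i, (L i).Infinite) :
    (∃ A : List U → ℕ → U, ExhaustivelyGenerates A (Set.range L)) ↔
      WeakAngluinExistence (Set.range L) := by
  constructor
  · rintro ⟨A, hA⟩
    exact direction1 hA (by rintro K ⟨i, rfl⟩; exact hL i)
  · exact direction2 L hL
end

section
/- Let U = ℤ. Let {S_d}_{d ∈ ℕ} be any partition of ℕ into finite sets with |S_1| < |S_2| < ..., let E be the set of negative even integers, let O be the set of negative odd integers, and let C = {E ∪ S_d : d ∈ ℕ} ∪ {O ∪ S_d : d ∈ ℕ}. Then the closure dimension of C is infinite, yet C can be uniformly generated with feedback. -/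
/-!
STATEMENT 17: Let U = ℤ.  Let {S_d}_{d ∈ ℕ} be a partition of ℕ (the nonnegative
integers inside ℤ) into finite sets of strictly increasing sizes, let E be the
negative even integers, O the negative odd integers, and
C = {E ∪ S_d : d} ∪ {O ∪ S_d : d}.  Then the closure dimension of C is infinite,
yet C can be uniformly generated with feedback.
-/

/-- A generator strategy in the feedback model: `query h x` is the membership query
`y_t` issued after receiving input `x_t` with history `h` of completed rounds, and
`out h x y a` is the output `z_t` after the answer `a_t` to the query. -/
structure FGen (U : Type) where
  query : List (U × U × Bool × U) → U → U
  out : List (U × U × Bool × U) → U → U → Bool → U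

/-- An adversary strategy in the feedback model: `inp h` is the next input `x_t`,
and `ans h x y` is the yes/no answer `a_t` to the generator's query `y_t`. -/
structure FAdv (U : Type) where
  inp : List (U × U × Bool × U) → U
  ans : List (U × U × Bool × U) → U → U → Bool

/-- The history of the first `t` completed rounds `(x_s, y_s, a_s, z_s)` of the
interaction between `Adv` and `Gen`. -/
def fRun {U : Type} (Adv : FAdv U) (Gen : FGen U) : ℕ → List (U × U × Bool × U)
  | 0 => []
  | t + 1 =>
      let h := fRun Adv Gen t
      let x := Adv.inp h
      let y := Gen.query h x
      let a := Adv.ans h x y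
      h ++ [(x, y, a, Gen.out h x y a)]

/-- The input `x_t` of round `t` (0-indexed) of the transcript T(Adv, Gen). -/
def fX {U : Type} (Adv : FAdv U) (Gen : FGen U) (t : ℕ) : U :=
  Adv.inp (fRun Adv Gen t)

/-- The generator's query `y_t` of round `t`. -/
def fY {U : Type} (Adv : FAdv U) (Gen : FGen U) (t : ℕ) : U :=
  Gen.query (fRun Adv Gen t) (fX Adv Gen t)

/-- The adversary's answer `a_t` of round `t`. -/
def fA {U : Type} (Adv : FAdv U) (Gen : FGen U) (t : ℕ) : Bool :=
  Adv.ans (fRun Adv Gen t) (fX Adv Gen t) (fY Adv Gen t)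

/-- The generator's output `z_t` of round `t`. -/
def fZ {U : Type} (Adv : FAdv U) (Gen : FGen U) (t : ℕ) : U :=
  Gen.out (fRun Adv Gen t) (fX Adv Gen t) (fY Adv Gen t) (fA Adv Gen t)

/-- `S_r`: the set of distinct inputs among the first `r` rounds. -/
def fS {U : Type} (Adv : FAdv U) (Gen : FGen U) (r : ℕ) : Set U :=
  fX Adv Gen '' {t | t < r}

/-- The adversary strategy `Adv` is consistent with the language `K` (against `Gen`):
the inputs form an enumeration of `K` and every answer is truthful for `K`. -/
def fConsistent {U : Type} (Adv : FAdv U) (Gen : FGen U) (K : Set U) : Prop :=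
  (∀ t, fX Adv Gen t ∈ K) ∧ (∀ w ∈ K, ∃ t, fX Adv Gen t = w) ∧
    ∀ t, fA Adv Gen t = true ↔ fY Adv Gen t ∈ K

/-- `C_r(T)`: the languages of `C` consistent with the transcript up to round `r`
(inputs belong to the language and all answers are truthful for it). -/
def fCons {U : Type} (C : Set (Set U)) (Adv : FAdv U) (Gen : FGen U) (r : ℕ) :
    Set (Set U) :=
  {Lang ∈ C | ∀ t < r, fX Adv Gen t ∈ Lang ∧ (fA Adv Gen t = true ↔ fY Adv Gen t ∈ Lang)}

/-- The effective intersection `E_r(T)`. -/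
def fE {U : Type} (C : Set (Set U)) (Adv : FAdv U) (Gen : FGen U) (r : ℕ) : Set U :=
  ⋂₀ fCons C Adv Gen r \ fS Adv Gen r

/-- The GF dimension of `C`: the supremum of all `d ∈ ℕ` such that for every
generator strategy there are `K ∈ C` and an adversary strategy consistent with `K`
whose transcript has a finite round `r ≥ d` with `|S_r| ≥ d` and `E_r(T) = ∅`. -/
noncomputable def gfDim {U : Type} (C : Set (Set U)) : ℕ∞ :=
  sSup {e : ℕ∞ | ∃ d : ℕ, e = (d : ℕ∞) ∧
    ∀ Gen : FGen U, ∃ K ∈ C, ∃ Adv : FAdv U,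
      fConsistent Adv Gen K ∧
      ∃ r : ℕ, d ≤ r ∧ d ≤ (fS Adv Gen r).ncard ∧ fE C Adv Gen r = ∅}

/-- `C` can be uniformly generated with feedback: some generator strategy `Gen` and
bound `t*` are such that against every adversary consistent with any `K ∈ C`, the
output of every round `t` with `|S_t| ≥ t*` lies in `K \ S_t` (here `S_t` counts the
inputs up to and including round `t`). -/
def UniformGenWithFeedback {U : Type} (C : Set (Set U)) : Prop :=
  ∃ Gen : FGen U, ∃ tstar : ℕ,
    ∀ K ∈ C, ∀ Adv : FAdv U, fConsistent Adv Gen K →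
      ∀ t : ℕ, tstar ≤ (fS Adv Gen (t + 1)).ncard →
        fZ Adv Gen t ∈ K \ fS Adv Gen (t + 1)

/-- The closure dimension of `C`: the supremum of sizes of finite sets `S ⊆ U` such
that the intersection of all languages of `C` containing `S` is finite. -/
noncomputable def closureDim {U : Type} (C : Set (Set U)) : ℕ∞ :=
  sSup {e : ℕ∞ | ∃ S : Finset U, e = (S.card : ℕ∞) ∧
    (⋂₀ {Lang ∈ C | (S : Set U) ⊆ Lang}).Finite}

/-- Our generator: always query `-2` (to learn the parity class of `K`), and output
a fresh negative number of the right parity, larger in absolute value than all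
inputs seen so far. -/
def myGen : FGen ℤ where
  query _ _ := -2
  out h x _ a :=
    let B : ℕ := ((x :: h.map Prod.fst).map Int.natAbs).sum
    if a then -(2 * (B : ℤ) + 2) else -(2 * (B : ℤ) + 3)

lemma fRun_eq {U : Type} (Adv : FAdv U) (Gen : FGen U) (t : ℕ) :
    fRun Adv Gen t =
      (List.range t).map (fun s => (fX Adv Gen s, fY Adv Gen s, fA Adv Gen s, fZ Adv Gen s)) := by
  induction t with
  | zero => rfl
  | succ t ih =>
      rw [List.range_succ, List.map_append, ← ih]
      rfl

theorem even_odd_partition_example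
    (Sd : ℕ → Set ℤ)
    (hfin : ∀ d, (Sd d).Finite)
    (hdisj : ∀ d e : ℕ, d ≠ e → Disjoint (Sd d) (Sd e))
    (hunion : (⋃ d, Sd d) = {n : ℤ | 0 ≤ n})
    (hmono : StrictMono fun d => (Sd d).ncard) :
    closureDim ((Set.range fun d => {n : ℤ | n < 0 ∧ Even n} ∪ Sd d) ∪
        (Set.range fun d => {n : ℤ | n < 0 ∧ Odd n} ∪ Sd d)) = ⊤ ∧
    UniformGenWithFeedback ((Set.range fun d => {n : ℤ | n < 0 ∧ Even n} ∪ Sd d) ∪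
        (Set.range fun d => {n : ℤ | n < 0 ∧ Odd n} ∪ Sd d)) := by
  set E : Set ℤ := {n : ℤ | n < 0 ∧ Even n} with hE
  set O : Set ℤ := {n : ℤ | n < 0 ∧ Odd n} with hO
  set C : Set (Set ℤ) :=
    (Set.range fun d => E ∪ Sd d) ∪ (Set.range fun d => O ∪ Sd d) with hC
  have hSnonneg : ∀ d, Sd d ⊆ {n : ℤ | 0 ≤ n} := by
    intro d n hn
    rw [← hunion]
    exact Set.mem_iUnion.2 ⟨d, hn⟩
  have hEO : Disjoint E O := by
    rw [Set.disjoint_left]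
    rintro n ⟨_, he⟩ ⟨_, ho⟩
    exact (Int.not_odd_iff_even.2 he) ho
  constructor
  · -- closure dimension is infinite
    rw [closureDim, sSup_eq_top]
    intro b hb
    lift b to ℕ using hb.ne
    set d := b + 1 with hd
    refine ⟨((hfin d).toFinset.card : ℕ∞), ⟨(hfin d).toFinset, rfl, ?_⟩, ?_⟩
    · -- intersection finite
      apply (hfin d).subset
      intro n hn
      have h1 : n ∈ E ∪ Sd d := by
        refine hn _ ⟨Or.inl ⟨d, rfl⟩, ?_⟩
        rw [Set.Finite.coe_toFinset]
        exact Set.subset_union_right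
      have h2 : n ∈ O ∪ Sd d := by
        refine hn _ ⟨Or.inr ⟨d, rfl⟩, ?_⟩
        rw [Set.Finite.coe_toFinset]
        exact Set.subset_union_right
      rcases h1 with h1 | h1
      · rcases h2 with h2 | h2
        · exact absurd h2 (Set.disjoint_left.1 hEO h1)
        · exact h2
      · exact h1
    · -- cardinality is large
      have hcard : (hfin d).toFinset.card = (Sd d).ncard :=
        (Set.ncard_eq_toFinset_card _ (hfin d)).symm
      have hge : d ≤ (Sd d).ncard := hmono.le_apply
      rw [hcard]
      calc (b : ℕ∞) < (d : ℕ∞) := by exact_mod_cast Nat.lt_succ_self b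
        _ ≤ ((Sd d).ncard : ℕ∞) := by exact_mod_cast hge
  · -- uniform generation with feedback
    refine ⟨myGen, 0, ?_⟩
    intro K hK Adv hcons t _
    -- the list of inputs seen through round t
    have hrun : (fRun Adv myGen t).map Prod.fst = (List.range t).map (fX Adv myGen) := by
      rw [fRun_eq, List.map_map]; rfl
    set B : ℕ :=
      ((fX Adv myGen t :: (fRun Adv myGen t).map Prod.fst).map Int.natAbs).sum with hB
    have hBle : ∀ s ≤ t, (fX Adv myGen s).natAbs ≤ B := by
      intro s hs
      apply List.single_le_sum (by intro x _; exact Nat.zero_le x)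
      simp only [List.mem_map, List.mem_cons, hrun, List.mem_range]
      rcases lt_or_eq_of_le hs with h | h
      · exact ⟨fX Adv myGen s, Or.inr ⟨s, h, rfl⟩, rfl⟩
      · exact ⟨fX Adv myGen s, Or.inl (by rw [h]), rfl⟩
    have hY : fY Adv myGen t = -2 := rfl
    have hZ : fZ Adv myGen t =
        if fA Adv myGen t then -(2 * (B : ℤ) + 2) else -(2 * (B : ℤ) + 3) := rfl
    -- whichever branch, |fZ| > B, so fZ is fresh
    have hfresh : fZ Adv myGen t ∉ fS Adv myGen (t + 1) := by
      rintro ⟨s, hs, hxs⟩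
      have hs' : s ≤ t := Nat.lt_succ_iff.1 hs
      have h1 : (fX Adv myGen s).natAbs ≤ B := hBle s hs'
      have h2 : B < (fZ Adv myGen t).natAbs := by
        rw [hZ]
        split <;> · rw [Int.natAbs_neg]; omega
      rw [hxs] at h1; omega
    refine ⟨?_, hfresh⟩
    -- fZ ∈ K
    rcases hK with ⟨d, rfl⟩ | ⟨d, rfl⟩
    · -- K = E ∪ Sd d : -2 ∈ K, so answer is yes, output is negative even
      have hmem : (-2 : ℤ) ∈ E ∪ Sd d := Or.inl ⟨by norm_num, ⟨-1, by ring⟩⟩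
      have ha : fA Adv myGen t = true := by
        rw [hcons.2.2 t, hY]; exact hmem
      rw [hZ, ha, if_pos rfl]
      have hb0 : (0 : ℤ) ≤ (B : ℤ) := Int.natCast_nonneg B
      exact Or.inl ⟨by omega, ⟨-((B : ℤ) + 1), by ring⟩⟩
    · -- K = O ∪ Sd d : -2 ∉ K, answer is no, output is negative odd
      have hmem : (-2 : ℤ) ∉ O ∪ Sd d := by
        rintro (⟨_, ho⟩ | hs)
        · exact (by decide : ¬ Odd (-2 : ℤ)) ho
        · have := hSnonneg d hs; simp at this
      have ha : fA Adv myGen t = false := by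
        rw [Bool.eq_false_iff]
        intro h
        exact hmem ((hcons.2.2 t).1 h |> (by rw [hY] at *; exact ·))
      rw [hZ, ha, if_neg (by simp)]
      exact Or.inl ⟨by omega, ⟨-((B : ℤ) + 2), by ring⟩⟩
end
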